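/- arXiv:1011.0067 — 2 statements merged into one kernel-verified Lean document; each statement's English description precedes it below -/
import Mathlib

section
/- For every t ∈ (0,T), the matrix-valued function τ ↦ Γ(0,τ) is differentiable at t with derivative ∂₂Γ(0,t) = Γ(0,t) Q(t)ᵀ + E(0,t) S(t)S(t)ᵀ. -/
set_option maxHeartbeats 1000000


open MeasureTheory Matrix Topology Filter

attribute [local instance] Matrix.normedAddCommGroup Matrix.normedSpace

/-- Matrix multiplication as a continuous bilinear map. -/
noncomputable def mulCLM (a b c : ℕ) :
    Matrix (Fin a) (Fin b) ℝ →L[ℝ] Matrix (Fin b) (Fin c) ℝ →L[ℝ] Matrix (Fin a) (Fin c) ℝ :=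
  LinearMap.toContinuousLinearMap
    { toFun := fun A => LinearMap.toContinuousLinearMap
        { toFun := fun B => A * B
          map_add' := fun x y => Matrix.mul_add A x y
          map_smul' := fun r x => Matrix.mul_smul A r x }
      map_add' := fun x y => by
        apply ContinuousLinearMap.ext; intro B
        simp [LinearMap.coe_toContinuousLinearMap', Matrix.add_mul]
      map_smul' := fun r x => by
        apply ContinuousLinearMap.ext; intro B
        simp [LinearMap.coe_toContinuousLinearMap', Matrix.smul_mul] }

@[simp] lemma mulCLM_apply {a b c : ℕ} (A : Matrix (Fin a) (Fin b) ℝ)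
    (B : Matrix (Fin b) (Fin c) ℝ) : mulCLM a b c A B = A * B := rfl

/-- Matrix transpose as a continuous linear map. -/
noncomputable def transposeCLM (a b : ℕ) :
    Matrix (Fin a) (Fin b) ℝ →L[ℝ] Matrix (Fin b) (Fin a) ℝ :=
  LinearMap.toContinuousLinearMap
    { toFun := fun A => Aᵀ
      map_add' := fun x y => Matrix.transpose_add x y
      map_smul' := fun r x => Matrix.transpose_smul r x }

@[simp] lemma transposeCLM_apply {a b : ℕ} (A : Matrix (Fin a) (Fin b) ℝ) :
    transposeCLM a b A = Aᵀ := rfl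

theorem HasDerivAt.matmul {a b c : ℕ} {f : ℝ → Matrix (Fin a) (Fin b) ℝ}
    {g : ℝ → Matrix (Fin b) (Fin c) ℝ} {f' : Matrix (Fin a) (Fin b) ℝ}
    {g' : Matrix (Fin b) (Fin c) ℝ} {x : ℝ}
    (hf : HasDerivAt f f' x) (hg : HasDerivAt g g' x) :
    HasDerivAt (fun τ => f τ * g τ) (f x * g' + f' * g x) x := by
  exact ContinuousLinearMap.hasDerivAt_of_bilinear (B := mulCLM a b c) (fun _ => hf) (fun _ => hg)

theorem contOn_sandwich {d p : ℕ} {A : ℝ → Matrix (Fin d) (Fin d) ℝ}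
    {S : ℝ → Matrix (Fin d) (Fin p) ℝ} {s : Set ℝ}
    (hA : ContinuousOn A s) (hS : ContinuousOn S s) :
    ContinuousOn (fun u => A u * S u * (S u)ᵀ * (A u)ᵀ) s := by
  have h : Continuous (fun pr : Matrix (Fin d) (Fin d) ℝ × Matrix (Fin d) (Fin p) ℝ =>
      pr.1 * pr.2 * pr.2ᵀ * pr.1ᵀ) :=
    (mulCLM d d d).continuous₂.comp₂
      ((mulCLM d p d).continuous₂.comp₂
        ((mulCLM d d p).continuous₂.comp₂ continuous_fst continuous_snd)
        ((transposeCLM d p).continuous.comp continuous_snd))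
      ((transposeCLM d d).continuous.comp continuous_fst)
  have h2 := h.comp_continuousOn (f := fun u : ℝ => (A u, S u)) (hA.prodMk hS)
  exact h2

/-- Identity (SEGED22): for `t ∈ (0,T)`, the map `τ ↦ Γ(0,τ)` is differentiable at `t`
with `∂₂Γ(0,t) = Γ(0,t) Q(t)ᵀ + E(0,t) S(t)S(t)ᵀ`. -/
theorem gamma_second_partial_derivative
    {d p : ℕ} (hd : 1 ≤ d)
    (Q : ℝ → Matrix (Fin d) (Fin d) ℝ) (S : ℝ → Matrix (Fin d) (Fin p) ℝ)
    (hQ : ContinuousOn Q (Set.Ici 0)) (hS : ContinuousOn S (Set.Ici 0))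
    (E : ℝ → ℝ → Matrix (Fin d) (Fin d) ℝ)
    (hEcont : ContinuousOn (fun x : ℝ × ℝ => E x.1 x.2) (Set.Ici 0 ×ˢ Set.Ici 0))
    (hEid : ∀ t : ℝ, 0 ≤ t → E t t = 1)
    (hEmul : ∀ r s t : ℝ, 0 ≤ r → 0 ≤ s → 0 ≤ t → E t s * E s r = E t r)
    (hEderiv : ∀ s : ℝ, 0 ≤ s → ∀ t : ℝ, 0 ≤ t →
      HasDerivAt (fun τ => E τ s) (Q t * E t s) t)
    (κ Γ : ℝ → ℝ → Matrix (Fin d) (Fin d) ℝ)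
    (hκ : ∀ s t : ℝ, 0 ≤ s → s ≤ t →
      κ s t = ∫ u in s..t, E t u * S u * (S u)ᵀ * (E t u)ᵀ)
    (hΓ : ∀ s t : ℝ, 0 ≤ s → s ≤ t → Γ s t = E s t * κ s t)
    (T : ℝ) (hT : 0 < T) :
    ∀ t : ℝ, 0 < t → t < T →
      HasDerivAt (fun τ => Γ 0 τ) (Γ 0 t * (Q t)ᵀ + E 0 t * (S t * (S t)ᵀ)) t := by
  intro t ht _
  -- the integrand with frozen first time
  set g : ℝ → Matrix (Fin d) (Fin d) ℝ :=
    fun u => E 0 u * S u * (S u)ᵀ * (E 0 u)ᵀ with hg_def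
  set M : ℝ → Matrix (Fin d) (Fin d) ℝ := fun τ => ∫ u in (0:ℝ)..τ, g u with hM_def
  -- continuity of g on Ici 0
  have hE0 : ContinuousOn (fun u : ℝ => E 0 u) (Set.Ici 0) := by
    apply hEcont.comp ((continuous_const.prodMk continuous_id).continuousOn)
    intro u hu
    simp only [Set.mem_prod, Set.mem_Ici]
    exact ⟨le_rfl, hu⟩
  have hgcont : ContinuousOn g (Set.Ici 0) :=
    hg_def ▸ contOn_sandwich hE0 hS
  letI : ENormedAddMonoid (Matrix (Fin d) (Fin d) ℝ) := NormedAddGroup.toENormedAddMonoid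
  letI : TopologicalSpace.PseudoMetrizableSpace (Matrix (Fin d) (Fin d) ℝ) :=
    inferInstanceAs (TopologicalSpace.PseudoMetrizableSpace (Fin d → Fin d → ℝ))
  have hgint : ∀ τ : ℝ, 0 ≤ τ → IntervalIntegrable g volume 0 τ := fun τ hτ =>
    (hgcont.mono (by rw [Set.uIcc_of_le hτ]; exact fun u hu => hu.1)).intervalIntegrable
  -- key identity : Γ 0 τ = M τ * (E τ 0)ᵀ for τ ≥ 0
  have key : ∀ τ : ℝ, 0 ≤ τ → Γ 0 τ = M τ * (E τ 0)ᵀ := by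
    intro τ hτ
    set A := E τ 0 with hA
    set L : Matrix (Fin d) (Fin d) ℝ →L[ℝ] Matrix (Fin d) (Fin d) ℝ :=
      ((mulCLM d d d).flip Aᵀ).comp (mulCLM d d d A) with hL
    have hLapp : ∀ X, L X = A * X * Aᵀ := fun X => rfl
    have hκτ : κ 0 τ = A * M τ * Aᵀ := by
      rw [hκ 0 τ le_rfl hτ]
      have hcongr : ∀ u ∈ Set.uIcc (0:ℝ) τ,
          E τ u * S u * (S u)ᵀ * (E τ u)ᵀ = L (g u) := by
        intro u hu
        rw [Set.uIcc_of_le hτ] at hu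
        rw [hLapp, hg_def]
        rw [← hEmul u 0 τ hu.1 le_rfl hτ, ← hA]
        simp [Matrix.transpose_mul, Matrix.mul_assoc]
      rw [intervalIntegral.integral_congr hcongr]
      exact (L.intervalIntegral_comp_comm (hgint τ hτ)).trans (hLapp _)
    rw [hΓ 0 τ le_rfl hτ, hκτ, ← Matrix.mul_assoc, ← Matrix.mul_assoc, hA,
      hEmul 0 τ 0 le_rfl hτ le_rfl, hEid 0 le_rfl, Matrix.one_mul]
  -- derivative of M at t
  have hM : HasDerivAt M (g t) t := by
    apply intervalIntegral.integral_hasDerivAt_right (hgint t ht.le)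
    · exact (hgcont.mono Set.Ioi_subset_Ici_self).stronglyMeasurableAtFilter
        isOpen_Ioi _ ht
    · exact hgcont.continuousAt (Ici_mem_nhds ht)
  -- derivative of τ ↦ (E τ 0)ᵀ at t
  have hEt : HasDerivAt (fun τ => (E τ 0)ᵀ) ((Q t * E t 0)ᵀ) t := by
    have := (transposeCLM d d).hasFDerivAt.comp_hasDerivAt t
      (hEderiv 0 le_rfl t ht.le)
    exact this
  have H : HasDerivAt (fun τ => M τ * (E τ 0)ᵀ)
      (M t * (Q t * E t 0)ᵀ + g t * (E t 0)ᵀ) t := hM.matmul hEt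
  have heq : M t * (Q t * E t 0)ᵀ + g t * (E t 0)ᵀ
      = Γ 0 t * (Q t)ᵀ + E 0 t * (S t * (S t)ᵀ) := by
    have h1 : M t * (Q t * E t 0)ᵀ = Γ 0 t * (Q t)ᵀ := by
      rw [key t ht.le, Matrix.transpose_mul, ← Matrix.mul_assoc]
    have h2 : g t * (E t 0)ᵀ = E 0 t * (S t * (S t)ᵀ) := by
      have hEE : E t 0 * E 0 t = 1 := by
        rw [hEmul t 0 t ht.le le_rfl ht.le, hEid t ht.le]
      rw [hg_def]
      calc E 0 t * S t * (S t)ᵀ * (E 0 t)ᵀ * (E t 0)ᵀ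
          = E 0 t * S t * (S t)ᵀ * (E t 0 * E 0 t)ᵀ := by
            rw [Matrix.transpose_mul, Matrix.mul_assoc]
        _ = E 0 t * (S t * (S t)ᵀ) := by
            rw [hEE, Matrix.transpose_one, Matrix.mul_one, Matrix.mul_assoc]
    rw [h1, h2]
  rw [← heq]
  apply H.congr_of_eventuallyEq
  filter_upwards [Ioi_mem_nhds ht] with τ hτ
  exact key τ (le_of_lt hτ)
end

section
/- The matrix-valued function t ↦ Γ(t,T) Γ(0,T)⁻¹ Γ(0,t) (Γ(t,T)ᵀ)⁻¹, defined for t ∈ (0,T), converges to the identity matrix I_d as t ↑ T. -/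
open MeasureTheory Matrix Topology Filter

attribute [local instance] Matrix.normedAddCommGroup Matrix.normedSpace

private instance matENAM {m n : Type*} [Fintype m] [Fintype n] :
    ENormedAddCommMonoid (Matrix m n ℝ) :=
  @NormedAddCommGroup.toENormedAddCommMonoid _ Matrix.normedAddCommGroup

private theorem contOn_matMul {X : Type*} [TopologicalSpace X] {l m n : ℕ}
    {A : X → Matrix (Fin l) (Fin m) ℝ} {B : X → Matrix (Fin m) (Fin n) ℝ} {s : Set X}
    (hA : ContinuousOn A s) (hB : ContinuousOn B s) :
    ContinuousOn (fun x => A x * B x) s :=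
  by exact (continuous_fst.matrix_mul continuous_snd).comp_continuousOn (hA.prodMk hB)

private theorem contOn_matTrans {X : Type*} [TopologicalSpace X] {l m : ℕ}
    {A : X → Matrix (Fin l) (Fin m) ℝ} {s : Set X} (hA : ContinuousOn A s) :
    ContinuousOn (fun x => (A x)ᵀ) s :=
  (continuous_id.matrix_transpose).comp_continuousOn hA

/-- `Γ(t,T) Γ(0,T)⁻¹ Γ(0,t) (Γ(t,T)ᵀ)⁻¹ → I_d` as `t ↑ T`. -/
theorem gamma_product_tendsto_one
    {d p : ℕ} (hd : 1 ≤ d)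
    (Q : ℝ → Matrix (Fin d) (Fin d) ℝ) (S : ℝ → Matrix (Fin d) (Fin p) ℝ)
    (hQ : ContinuousOn Q (Set.Ici 0)) (hS : ContinuousOn S (Set.Ici 0))
    (E : ℝ → ℝ → Matrix (Fin d) (Fin d) ℝ)
    (hEcont : ContinuousOn (fun x : ℝ × ℝ => E x.1 x.2) (Set.Ici 0 ×ˢ Set.Ici 0))
    (hEid : ∀ t : ℝ, 0 ≤ t → E t t = 1)
    (hEmul : ∀ r s t : ℝ, 0 ≤ r → 0 ≤ s → 0 ≤ t → E t s * E s r = E t r)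
    (hEderiv : ∀ s : ℝ, 0 ≤ s → ∀ t : ℝ, 0 ≤ t →
      HasDerivAt (fun τ => E τ s) (Q t * E t s) t)
    (κ Γ : ℝ → ℝ → Matrix (Fin d) (Fin d) ℝ)
    (hκ : ∀ s t : ℝ, 0 ≤ s → s ≤ t →
      κ s t = ∫ u in s..t, E t u * S u * (S u)ᵀ * (E t u)ᵀ)
    (hΓ : ∀ s t : ℝ, 0 ≤ s → s ≤ t → Γ s t = E s t * κ s t)
    (T : ℝ) (hT : 0 < T)
    (hκpd : ∀ s t : ℝ, 0 ≤ s → s < t → (κ s t).IsSymm ∧ (κ s t).PosDef) :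
    Tendsto (fun t : ℝ => Γ t T * (Γ 0 T)⁻¹ * Γ 0 t * ((Γ t T)ᵀ)⁻¹)
      (𝓝[<] T) (𝓝 (1 : Matrix (Fin d) (Fin d) ℝ)) := by
  have hT0 : (0:ℝ) ≤ T := hT.le
  -- continuity of the integrand family on `[0, ∞)`
  have hfc : ∀ r : ℝ, 0 ≤ r →
      ContinuousOn (fun u => E r u * S u * (S u)ᵀ * (E r u)ᵀ) (Set.Ici 0) := by
    intro r hr
    have hE' : ContinuousOn (fun u : ℝ => E r u) (Set.Ici 0) := by
      have hpair : ContinuousOn (fun u : ℝ => ((r, u) : ℝ × ℝ)) (Set.Ici 0) :=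
        (continuous_const.prodMk continuous_id).continuousOn
      exact hEcont.comp hpair (fun u hu => Set.mk_mem_prod hr hu)
    exact contOn_matMul (contOn_matMul (contOn_matMul hE' hS) (contOn_matTrans hS))
      (contOn_matTrans hE')
  -- interval integrability
  have hfint : ∀ r : ℝ, 0 ≤ r → ∀ a b : ℝ, a ∈ Set.Icc 0 r → b ∈ Set.Icc 0 r →
      IntervalIntegrable (fun u => E r u * S u * (S u)ᵀ * (E r u)ᵀ) volume a b := by
    intro r hr a b ha hb
    apply ContinuousOn.intervalIntegrable
    refine (hfc r hr).mono ?_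
    intro x hx
    rcases Set.mem_uIcc.mp hx with h | h
    · exact le_trans ha.1 h.1
    · exact le_trans hb.1 h.1
  -- inverse of evolution family
  have hEinv : ∀ s t : ℝ, 0 ≤ s → 0 ≤ t → (E s t)⁻¹ = E t s := by
    intro s t hs ht
    exact Matrix.inv_eq_right_inv (by rw [hEmul s t s hs ht hs, hEid s hs])
  -- invertibility of κ
  have hκunit : ∀ s t : ℝ, 0 ≤ s → s < t → IsUnit (κ s t).det :=
    fun s t hs hst => isUnit_iff_ne_zero.mpr (ne_of_gt (hκpd s t hs hst).2.det_pos)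
  -- splitting identity
  have hsplit : ∀ t : ℝ, 0 ≤ t → t ≤ T →
      κ 0 T = E T t * κ 0 t * (E T t)ᵀ + κ t T := by
    intro t ht htT
    have hIab : IntervalIntegrable (fun u => E T u * S u * (S u)ᵀ * (E T u)ᵀ) volume 0 t :=
      hfint T hT0 0 t ⟨le_rfl, hT0⟩ ⟨ht, htT⟩
    have hIbc : IntervalIntegrable (fun u => E T u * S u * (S u)ᵀ * (E T u)ᵀ) volume t T :=
      hfint T hT0 t T ⟨ht, htT⟩ ⟨hT0, le_rfl⟩
    have hadd : (∫ u in (0:ℝ)..t, E T u * S u * (S u)ᵀ * (E T u)ᵀ)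
        + (∫ u in t..T, E T u * S u * (S u)ᵀ * (E T u)ᵀ)
        = ∫ u in (0:ℝ)..T, E T u * S u * (S u)ᵀ * (E T u)ᵀ :=
      intervalIntegral.integral_add_adjacent_intervals hIab hIbc
    have hgint : IntervalIntegrable (fun u => E t u * S u * (S u)ᵀ * (E t u)ᵀ) volume 0 t :=
      hfint t ht 0 t ⟨le_rfl, ht⟩ ⟨ht, le_rfl⟩
    set L0 : Matrix (Fin d) (Fin d) ℝ →ₗ[ℝ] Matrix (Fin d) (Fin d) ℝ :=
      (LinearMap.mulRight ℝ (E T t)ᵀ).comp (LinearMap.mulLeft ℝ (E T t)) with hL0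
    set L : Matrix (Fin d) (Fin d) ℝ →L[ℝ] Matrix (Fin d) (Fin d) ℝ :=
      LinearMap.toContinuousLinearMap L0 with hLdef
    have hL : ∀ X : Matrix (Fin d) (Fin d) ℝ, L X = E T t * X * (E T t)ᵀ := fun X => rfl
    have h1 : (∫ u in (0:ℝ)..t, E T u * S u * (S u)ᵀ * (E T u)ᵀ)
        = E T t * κ 0 t * (E T t)ᵀ := by
      have hcongr : Set.EqOn (fun u => E T u * S u * (S u)ᵀ * (E T u)ᵀ)
          (fun u => L (E t u * S u * (S u)ᵀ * (E t u)ᵀ)) (Set.uIcc 0 t) := by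
        intro u hu
        rw [Set.uIcc_of_le ht] at hu
        have hE : E T t * E t u = E T u := hEmul u t T hu.1 ht hT0
        simp only [hL]
        rw [← hE]
        simp [Matrix.transpose_mul, Matrix.mul_assoc]
      rw [intervalIntegral.integral_congr hcongr]
      erw [ContinuousLinearMap.intervalIntegral_comp_comm L hgint]
      rw [← hκ 0 t le_rfl ht]
      exact hL _
    rw [hκ 0 T le_rfl hT0, hκ t T ht htT, ← hadd, h1]
  -- key algebraic identity
  have key : ∀ t : ℝ, 0 < t → t < T →
      Γ t T * (Γ 0 T)⁻¹ * Γ 0 t * ((Γ t T)ᵀ)⁻¹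
        = E t T * (1 - κ t T * (κ 0 T)⁻¹) := by
    intro t ht htT
    have ht0 : (0:ℝ) ≤ t := ht.le
    have hKunit := hκunit t T ht0 htT
    have hK0unit := hκunit 0 T le_rfl hT
    have hKsymm : (κ t T)ᵀ = κ t T := (hκpd t T ht0 htT).1
    have h2 : (Γ 0 T)⁻¹ = (κ 0 T)⁻¹ * E T 0 := by
      rw [hΓ 0 T le_rfl hT0, Matrix.mul_inv_rev, hEinv 0 T le_rfl hT0]
    have h4 : ((Γ t T)ᵀ)⁻¹ = (E T t)ᵀ * (κ t T)⁻¹ := by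
      rw [hΓ t T ht0 htT.le, Matrix.transpose_mul, Matrix.mul_inv_rev, hKsymm,
        ← Matrix.transpose_nonsing_inv, hEinv t T ht0 hT0]
    have hB : E T 0 * E 0 t = E T t := hEmul t 0 T ht0 le_rfl hT0
    have hsplit' : E T t * κ 0 t * (E T t)ᵀ = κ 0 T - κ t T :=
      eq_sub_of_add_eq (hsplit t ht0 htT.le).symm
    have e1 : (κ 0 T)⁻¹ * ((κ 0 T - κ t T) * (κ t T)⁻¹) = (κ t T)⁻¹ - (κ 0 T)⁻¹ := by
      rw [sub_mul, Matrix.mul_nonsing_inv _ hKunit, mul_sub, mul_one,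
        ← Matrix.mul_assoc, Matrix.nonsing_inv_mul _ hK0unit, Matrix.one_mul]
    have e2 : κ t T * ((κ t T)⁻¹ - (κ 0 T)⁻¹) = 1 - κ t T * (κ 0 T)⁻¹ := by
      rw [mul_sub, Matrix.mul_nonsing_inv _ hKunit]
    rw [h4, h2, hΓ t T ht0 htT.le, hΓ 0 t le_rfl ht0]
    calc E t T * κ t T * ((κ 0 T)⁻¹ * E T 0) * (E 0 t * κ 0 t) * ((E T t)ᵀ * (κ t T)⁻¹)
        = E t T * (κ t T * ((κ 0 T)⁻¹
            * (E T 0 * E 0 t * κ 0 t * (E T t)ᵀ * (κ t T)⁻¹))) := by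
          simp only [Matrix.mul_assoc]
      _ = E t T * (κ t T * ((κ 0 T)⁻¹ * ((κ 0 T - κ t T) * (κ t T)⁻¹))) := by
          rw [hB, hsplit']
      _ = E t T * (1 - κ t T * (κ 0 T)⁻¹) := by rw [e1, e2]
  have hmemIoo : Set.Ioo (0:ℝ) T ∈ 𝓝[<] T := Ioo_mem_nhdsLT_of_mem ⟨hT, le_rfl⟩
  have heq : (fun t : ℝ => Γ t T * (Γ 0 T)⁻¹ * Γ 0 t * ((Γ t T)ᵀ)⁻¹)
      =ᶠ[𝓝[<] T] (fun t => E t T * (1 - κ t T * (κ 0 T)⁻¹)) :=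
    eventually_of_mem hmemIoo (fun t ht => key t ht.1 ht.2)
  -- limit of E t T
  have hE1 : Tendsto (fun t : ℝ => E t T) (𝓝[<] T) (𝓝 1) := by
    have hpair : Tendsto (fun t : ℝ => ((t, T) : ℝ × ℝ)) (𝓝[<] T)
        (𝓝[Set.Ici 0 ×ˢ Set.Ici 0] (T, T)) := by
      apply tendsto_nhdsWithin_of_tendsto_nhds_of_eventually_within
      · exact ((continuous_id.prodMk continuous_const).tendsto T).mono_left nhdsWithin_le_nhds
      · exact eventually_of_mem hmemIoo (fun t ht => Set.mk_mem_prod ht.1.le hT0)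
    have := (hEcont (T, T) (Set.mk_mem_prod hT0 hT0)).tendsto.comp hpair
    rwa [hEid T hT0] at this
  -- limit of κ t T
  have hκ0 : Tendsto (fun t : ℝ => κ t T) (𝓝[<] T) (𝓝 0) := by
    have hint : IntegrableOn (fun u => E T u * S u * (S u)ᵀ * (E T u)ᵀ)
        (Set.uIcc 0 T) volume := by
      refine ContinuousOn.integrableOn_compact isCompact_uIcc ?_
      refine (hfc T hT0).mono ?_
      rw [Set.uIcc_of_le hT0]
      exact fun x hx => hx.1
    have hcont : ContinuousOn
        (fun t : ℝ => ∫ u in t..T, E T u * S u * (S u)ᵀ * (E T u)ᵀ) (Set.uIcc 0 T) :=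
      intervalIntegral.continuousOn_primitive_interval_left hint
    have hle : 𝓝[<] T ≤ 𝓝[Set.uIcc 0 T] T := by
      rw [← nhdsWithin_Ioo_eq_nhdsLT hT]
      refine nhdsWithin_mono _ ?_
      rw [Set.uIcc_of_le hT0]
      exact fun x hx => ⟨hx.1.le, hx.2.le⟩
    have htend : Tendsto (fun t : ℝ => ∫ u in t..T, E T u * S u * (S u)ᵀ * (E T u)ᵀ)
        (𝓝[<] T) (𝓝 (∫ u in T..T, E T u * S u * (S u)ᵀ * (E T u)ᵀ)) :=
      ((hcont T Set.right_mem_uIcc).tendsto).mono_left hle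
    rw [intervalIntegral.integral_same] at htend
    refine htend.congr' ?_
    exact eventually_of_mem hmemIoo (fun t ht => (hκ t T ht.1.le ht.2.le).symm)
  -- combine
  have hfinal : Tendsto (fun t : ℝ => E t T * (1 - κ t T * (κ 0 T)⁻¹)) (𝓝[<] T)
      (𝓝 (1 : Matrix (Fin d) (Fin d) ℝ)) := by
    have h01 : Tendsto (fun t : ℝ => 1 - κ t T * (κ 0 T)⁻¹) (𝓝[<] T)
        (𝓝 ((1 : Matrix (Fin d) (Fin d) ℝ) - 0 * (κ 0 T)⁻¹)) :=
      tendsto_const_nhds.sub (hκ0.mul tendsto_const_nhds)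
    rw [zero_mul, sub_zero] at h01
    simpa using hE1.mul h01
  exact hfinal.congr' heq.symm
end
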